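/- Let 𝔸 be a finite idempotent algebra satisfying the EGP property. Then there exist α, β ⊊ A with α ∪ β = A such that, setting ρ = (α × α) ∪ (β × β), for every n the relation σ_n ⊆ A^{2n} defined by σ_n(x_1,…,x_{2n}) ⇔ ρ(x_1,x_2) ∨ ρ(x_3,x_4) ∨ … ∨ ρ(x_{2n−1},x_{2n}) is invariant for 𝔸. -/

import Mathlib

/-- An algebra: a carrier type `A` together with an indexed family of finitary operations. -/
structure MyAlgebra (A : Type) where
  ι : Type
  arity : ι → ℕ
  op : ∀ i : ι, (Fin (arity i) → A) → A

namespace MyAlgebra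

variable {A : Type}

/-- A set of `n`-tuples is closed under coordinatewise application of all operations. -/
def Closed (𝔸 : MyAlgebra A) {n : ℕ} (S : Set (Fin n → A)) : Prop :=
  ∀ i : 𝔸.ι, ∀ γ : Fin (𝔸.arity i) → (Fin n → A),
    (∀ j, γ j ∈ S) → (fun t : Fin n => 𝔸.op i (fun j => γ j t)) ∈ S

/-- The subalgebra of `𝔸^n` generated by `X`. -/
def gen (𝔸 : MyAlgebra A) {n : ℕ} (X : Set (Fin n → A)) : Set (Fin n → A) :=
  ⋂₀ {S : Set (Fin n → A) | X ⊆ S ∧ 𝔸.Closed S}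

/-- Polynomially generated powers. -/
def PGP (𝔸 : MyAlgebra A) : Prop :=
  ∃ p : Polynomial ℕ, ∀ n : ℕ, ∃ X : Finset (Fin n → A),
    X.card ≤ p.eval n ∧ 𝔸.gen (X : Set (Fin n → A)) = Set.univ

/-- Exponentially generated powers. -/
def EGP (𝔸 : MyAlgebra A) : Prop :=
  ∃ b C : ℝ, 1 < b ∧ 0 < C ∧ ∀ n : ℕ, ∀ X : Finset (Fin n → A),
    𝔸.gen (X : Set (Fin n → A)) = Set.univ → C * b ^ n ≤ (X.card : ℝ)

/-- Every operation is idempotent. -/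
def Idempotent (𝔸 : MyAlgebra A) : Prop :=
  ∀ i : 𝔸.ι, ∀ a : A, 𝔸.op i (fun _ => a) = a

end MyAlgebra

/-- The number of switches of a tuple: indices `i` with `a i ≠ a (i+1)`,
encoded as pairs of consecutive indices. -/
def numSwitches {A : Type} [DecidableEq A] {n : ℕ} (a : Fin n → A) : ℕ :=
  (Finset.univ.filter (fun p : Fin n × Fin n =>
    (p.2 : ℕ) = (p.1 : ℕ) + 1 ∧ a p.1 ≠ a p.2)).card

/-- `𝔸` is switchable: for some `r`, every power is generated by tuples with at most `r` switches. -/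
def MyAlgebra.Switchable {A : Type} [DecidableEq A] (𝔸 : MyAlgebra A) : Prop :=
  ∃ r : ℕ, ∀ n : ℕ, 𝔸.gen {a : Fin n → A | numSwitches a ≤ r} = Set.univ

/-- A nice relation: not full, and contains every tuple with two equal consecutive entries. -/
def Nice {A : Type} {m : ℕ} (ρ : Set (Fin m → A)) : Prop :=
  ρ ≠ Set.univ ∧ ∀ c : Fin m → A,
    (∃ i : ℕ, ∃ h : i + 1 < m, c ⟨i, by omega⟩ = c ⟨i + 1, h⟩) → c ∈ ρ

/-- `D_{A,m}`: tuples of length `2m` where some pair `(a_{2i+1}, a_{2i+2})` is equal. -/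
def Drel (A : Type) (m : ℕ) : Set (Fin (2 * m) → A) :=
  {a | ∃ i : ℕ, ∃ h : 2 * i + 1 < 2 * m, a ⟨2 * i, by omega⟩ = a ⟨2 * i + 1, h⟩}

/-- `f` preserves the relation `σ`. -/
def Preserves {A : Type} {s m : ℕ} (f : (Fin s → A) → A) (σ : Set (Fin m → A)) : Prop :=
  ∀ γ : Fin s → (Fin m → A), (∀ j, γ j ∈ σ) → (fun t : Fin m => f (fun j => γ j t)) ∈ σ

/-- `f` is `αβ`-projective. -/
def ABProjective {A : Type} (α β : Set A) {s : ℕ} (f : (Fin s → A) → A) : Prop :=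
  ∃ j : Fin s, ∀ a : Fin s → A, ∀ S ∈ ({α, β} : Set (Set A)), a j ∈ S → f a ∈ S

/-- `σ_n(x₁,…,x_{2n}) ⇔ ρ(x₁,x₂) ∨ … ∨ ρ(x_{2n-1},x_{2n})`. -/
def sigmaRel {A : Type} (ρ : Set (A × A)) (n : ℕ) : Set (Fin (2 * n) → A) :=
  {t | ∃ i : ℕ, ∃ h : 2 * i + 1 < 2 * n, (t ⟨2 * i, by omega⟩, t ⟨2 * i + 1, h⟩) ∈ ρ}

namespace Zhuk

attribute [local instance] Classical.propDecidable

open MyAlgebra Finset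

variable {A : Type} {𝔸 : MyAlgebra A}

lemma subset_gen {n : ℕ} {X : Set (Fin n → A)} : X ⊆ 𝔸.gen X :=
  fun x hx S hS => hS.1 hx

lemma closed_gen {n : ℕ} {X : Set (Fin n → A)} : 𝔸.Closed (𝔸.gen X) := by
  intro i γ hγ S hS
  exact hS.2 i γ (fun j => hγ j S hS)

lemma gen_le {n : ℕ} {X S : Set (Fin n → A)} (h1 : X ⊆ S) (h2 : 𝔸.Closed S) :
    𝔸.gen X ⊆ S := fun x hx => hx S ⟨h1, h2⟩

lemma gen_le_gen {n : ℕ} {X Y : Set (Fin n → A)} (h : X ⊆ 𝔸.gen Y) :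
    𝔸.gen X ⊆ 𝔸.gen Y := gen_le h closed_gen

/-- Substitution-with-constants map. -/
def Glue {m n : ℕ} (e : Fin n → (Fin m ⊕ A)) (y : Fin m → A) : Fin n → A :=
  fun t => Sum.elim y id (e t)

lemma glue_op (hid : 𝔸.Idempotent) {m n : ℕ} (e : Fin n → (Fin m ⊕ A))
    (i : 𝔸.ι) (γ : Fin (𝔸.arity i) → (Fin m → A)) :
    Glue e (fun t => 𝔸.op i (fun j => γ j t)) =
      (fun t : Fin n => 𝔸.op i (fun j => Glue e (γ j) t)) := by
  funext t
  unfold Glue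
  cases h : e t with
  | inl u => simp
  | inr c => simp [hid i c]

lemma glue_gen (hid : 𝔸.Idempotent) {m n : ℕ} (e : Fin n → (Fin m ⊕ A))
    {X : Set (Fin m → A)} {x : Fin m → A} (hx : x ∈ 𝔸.gen X) :
    Glue e x ∈ 𝔸.gen (Glue e '' X) := by
  have : x ∈ {y : Fin m → A | Glue e y ∈ 𝔸.gen (Glue e '' X)} := by
    apply hx
    constructor
    · exact fun y hy => subset_gen ⟨y, hy, rfl⟩
    · intro i γ hγ
      simp only [Set.mem_setOf_eq]
      rw [glue_op hid]
      exact closed_gen i (fun j => Glue e (γ j)) hγ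
  exact this

lemma glue_gen_le (hid : 𝔸.Idempotent) {m n : ℕ} (e : Fin n → (Fin m ⊕ A))
    {X : Set (Fin m → A)} {Y : Set (Fin n → A)} {x : Fin m → A}
    (hx : x ∈ 𝔸.gen X) (him : ∀ y ∈ X, Glue e y ∈ 𝔸.gen Y) :
    Glue e x ∈ 𝔸.gen Y := by
  refine gen_le_gen ?_ (glue_gen hid e hx)
  rintro _ ⟨y, hy, rfl⟩
  exact him y hy

lemma closed_glue_pre (hid : 𝔸.Idempotent) {m n : ℕ} (e : Fin n → (Fin m ⊕ A))
    {σ : Set (Fin n → A)} (hσ : 𝔸.Closed σ) :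
    𝔸.Closed {y : Fin m → A | Glue e y ∈ σ} := by
  intro i γ hγ
  simp only [Set.mem_setOf_eq]
  rw [glue_op hid]
  exact hσ i (fun j => Glue e (γ j)) hγ



/-! ### Pairs and the relations Ω_k -/

def plo {k : ℕ} (i : Fin k) : Fin (2 * k) := ⟨2 * i.1, by omega⟩
def phi {k : ℕ} (i : Fin k) : Fin (2 * k) := ⟨2 * i.1 + 1, by omega⟩

/-- the `i`-th pair of a `2k`-tuple -/
def pr {k : ℕ} (x : Fin (2 * k) → A) (i : Fin k) : A × A := (x (plo i), x (phi i))

lemma mem_Drel_iff {k : ℕ} (x : Fin (2 * k) → A) :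
    x ∈ Drel A k ↔ ∃ i : Fin k, (pr x i).1 = (pr x i).2 := by
  constructor
  · rintro ⟨i, h, he⟩
    exact ⟨⟨i, by omega⟩, he⟩
  · rintro ⟨i, he⟩
    exact ⟨i.1, by omega, he⟩

def Om (𝔸 : MyAlgebra A) (k : ℕ) : Set (Fin (2 * k) → A) := 𝔸.gen (Drel A k)

lemma drel_subset_Om {k : ℕ} : Drel A k ⊆ Om 𝔸 k := subset_gen

lemma closed_Om {k : ℕ} : 𝔸.Closed (Om 𝔸 k) := closed_gen

/-- A set of pairs is free if no tuple all of whose pairs lie in it belongs to Ω. -/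
def IsFree (𝔸 : MyAlgebra A) (P : Set (A × A)) : Prop :=
  ∀ k : ℕ, ∀ x : Fin (2 * k) → A, (∀ i : Fin k, pr x i ∈ P) → x ∉ Om 𝔸 k

lemma not_isFree_iff {P : Set (A × A)} :
    ¬ IsFree 𝔸 P ↔ ∃ k : ℕ, ∃ x : Fin (2 * k) → A,
      (∀ i : Fin k, pr x i ∈ P) ∧ x ∈ Om 𝔸 k := by
  unfold IsFree
  push_neg
  rfl

/-- canonical all-`p` tuple -/
def ptup (p : A × A) (k : ℕ) : Fin (2 * k) → A :=
  fun t => if t.1 % 2 = 0 then p.1 else p.2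

lemma pr_ptup {p : A × A} {k : ℕ} (i : Fin k) : pr (ptup p k) i = p := by
  unfold pr ptup plo phi
  simp only []
  have h1 : (2 * i.1) % 2 = 0 := by omega
  have h2 : (2 * i.1 + 1) % 2 = 1 := by omega
  rw [if_pos h1, if_neg (by omega)]

lemma eq_ptup {p : A × A} {k : ℕ} {x : Fin (2 * k) → A}
    (h : ∀ i : Fin k, pr x i = p) : x = ptup p k := by
  funext t
  have hk : t.1 / 2 < k := by omega
  have := h ⟨t.1 / 2, hk⟩
  unfold pr plo phi at this
  unfold ptup
  by_cases hpar : t.1 % 2 = 0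
  · rw [if_pos hpar]
    have ht : t = plo ⟨t.1 / 2, hk⟩ := by
      apply Fin.ext; show t.1 = 2 * (t.1 / 2); omega
    rw [ht]
    exact congrArg Prod.fst this
  · rw [if_neg hpar]
    have ht : t = phi ⟨t.1 / 2, hk⟩ := by
      apply Fin.ext; show t.1 = 2 * (t.1 / 2) + 1; omega
    rw [ht]
    exact congrArg Prod.snd this

/-- Padding lemma: a member of `Ω k` extends to a member of `Ω k'` with prescribed
new pairs `p₀`. -/
lemma pad (hid : 𝔸.Idempotent) {k k' : ℕ} (hkk' : k ≤ k') (p₀ : A × A)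
    {v : Fin (2 * k) → A} (hv : v ∈ Om 𝔸 k) :
    ∃ v' ∈ Om 𝔸 k', ∀ i' : Fin k',
      pr v' i' = if h : i'.1 < k then pr v ⟨i'.1, h⟩ else p₀ := by
  set e : Fin (2 * k') → (Fin (2 * k) ⊕ A) := fun t =>
    if h : t.1 < 2 * k then Sum.inl ⟨t.1, h⟩
    else Sum.inr (if t.1 % 2 = 0 then p₀.1 else p₀.2) with he
  refine ⟨Glue e v, ?_, ?_⟩
  · refine glue_gen_le hid e hv ?_
    intro y hy
    apply drel_subset_Om
    rw [mem_Drel_iff] at hy ⊢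
    obtain ⟨i, hi⟩ := hy
    refine ⟨⟨i.1, by omega⟩, ?_⟩
    unfold pr plo phi at hi ⊢
    simp only [Glue]
    have h1 : 2 * i.1 < 2 * k := by omega
    have h2 : 2 * i.1 + 1 < 2 * k := by omega
    simp only [he, dif_pos h1, dif_pos h2]
    exact hi
  · intro i'
    by_cases h : i'.1 < k
    · rw [dif_pos h]
      unfold pr plo phi Glue
      have h1 : 2 * i'.1 < 2 * k := by omega
      have h2 : 2 * i'.1 + 1 < 2 * k := by omega
      simp only [he, dif_pos h1, dif_pos h2]
      rfl
    · rw [dif_neg h]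
      unfold pr plo phi Glue
      have h1 : ¬ (2 * i'.1 < 2 * k) := by omega
      have h2 : ¬ (2 * i'.1 + 1 < 2 * k) := by omega
      simp only [he, dif_neg h1, dif_neg h2]
      have : (2 * i'.1) % 2 = 0 := by omega
      rw [if_pos this, if_neg (by omega)]
      simp


/-! ### Switch counting and blow-ups -/

def sswitch {n : ℕ} (x : Fin n → A) (j : Fin n) : Prop :=
  ∃ h : j.1 + 1 < n, x j ≠ x ⟨j.1 + 1, h⟩

noncomputable def sw {n : ℕ} (x : Fin n → A) : ℕ :=
  (Finset.univ.filter (fun j => sswitch x j)).card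

noncomputable def swp {n : ℕ} (x : Fin n → A) (i : Fin n) : ℕ :=
  (Finset.univ.filter (fun j => j.1 + 1 ≤ i.1 ∧ sswitch x j)).card

lemma swp_le_sw {n : ℕ} (x : Fin n → A) (i : Fin n) : swp x i ≤ sw x := by
  apply Finset.card_le_card
  intro j hj
  simp only [Finset.mem_filter] at *
  exact ⟨hj.1, hj.2.2⟩

lemma swp_mono {n : ℕ} (x : Fin n → A) {i i' : Fin n} (h : i.1 ≤ i'.1) :
    swp x i ≤ swp x i' := by
  apply Finset.card_le_card
  intro j hj
  simp only [Finset.mem_filter] at *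
  exact ⟨hj.1, by omega, hj.2.2⟩

lemma swp_adj {n : ℕ} (x : Fin n → A) (i : Fin n) (h : i.1 + 1 < n) :
    swp x ⟨i.1 + 1, h⟩ = if x i = x ⟨i.1 + 1, h⟩ then swp x i else swp x i + 1 := by
  by_cases heq : x i = x ⟨i.1 + 1, h⟩
  · rw [if_pos heq]
    unfold swp
    congr 1
    apply Finset.filter_congr
    intro j _
    simp only [eq_iff_iff]
    constructor
    · rintro ⟨hj, hs⟩
      refine ⟨?_, hs⟩
      rcases Nat.lt_or_ge (j.1 + 1) (i.1 + 1) with h' | h'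
      · omega
      · exfalso
        have : j = i := Fin.ext (by omega)
        subst this
        obtain ⟨h1, h2⟩ := hs
        exact h2 heq
    · rintro ⟨hj, hs⟩
      exact ⟨by omega, hs⟩
  · rw [if_neg heq]
    unfold swp
    have : (Finset.univ.filter (fun j : Fin n => j.1 + 1 ≤ i.1 + 1 ∧ sswitch x j)) =
        insert i (Finset.univ.filter (fun j : Fin n => j.1 + 1 ≤ i.1 ∧ sswitch x j)) := by
      ext j
      simp only [Finset.mem_filter, Finset.mem_insert, Finset.mem_univ, true_and]
      constructor
      · rintro ⟨hj, hs⟩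
        by_cases hji : j = i
        · exact Or.inl hji
        · exact Or.inr ⟨by
            have : j.1 ≠ i.1 := fun hc => hji (Fin.ext hc)
            omega, hs⟩
      · rintro (rfl | ⟨hj, hs⟩)
        · exact ⟨le_refl _, ⟨h, heq⟩⟩
        · exact ⟨by omega, hs⟩
    rw [this, Finset.card_insert_of_notMem]
    simp only [Finset.mem_filter]
    rintro ⟨_, hj, _⟩
    omega

lemma swp_const {n : ℕ} (x : Fin n → A) :
    ∀ d : ℕ, ∀ i i' : Fin n, i'.1 = i.1 + d → swp x i = swp x i' → x i = x i' := by
  intro d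
  induction d with
  | zero => intro i i' h _; have : i = i' := Fin.ext (by omega); rw [this]
  | succ d ih =>
    intro i i' h hsw
    have hmid : i.1 + 1 < n := by omega
    have h1 : swp x i ≤ swp x ⟨i.1 + 1, hmid⟩ := swp_mono x (Nat.le_succ _)
    have h2 : swp x ⟨i.1 + 1, hmid⟩ ≤ swp x i' := swp_mono x (show i.1 + 1 ≤ i'.1 by omega)
    have hadj := swp_adj x i hmid
    have hxi : x i = x ⟨i.1 + 1, hmid⟩ := by
      by_contra hc
      rw [if_neg hc] at hadj
      omega
    rw [if_pos hxi] at hadj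
    rw [hxi]
    exact ih ⟨i.1 + 1, hmid⟩ i' (show i'.1 = i.1 + 1 + d by omega) (by omega)

lemma sw_comp {n m : ℕ} (φ : Fin n → Fin m)
    (hmono : ∀ j j' : Fin n, j.1 ≤ j'.1 → (φ j).1 ≤ (φ j').1)
    (hjump : ∀ j : Fin n, ∀ h : j.1 + 1 < n, (φ ⟨j.1 + 1, h⟩).1 ≤ (φ j).1 + 1)
    (y : Fin m → A) : sw (fun t => y (φ t)) ≤ sw y := by
  unfold sw
  apply Finset.card_le_card_of_injOn φ
  · intro j hj
    simp only [Finset.mem_coe, Finset.mem_filter, Finset.mem_univ, true_and] at *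
    obtain ⟨h, hne⟩ := hj
    have hv : (⟨j.1 + 1, h⟩ : Fin n).1 = j.1 + 1 := rfl
    have hj1 := hjump j h
    have hj2 := hmono j ⟨j.1 + 1, h⟩ (Nat.le_succ _)
    have hne' : (φ j).1 ≠ (φ ⟨j.1 + 1, h⟩).1 := by
      intro hc
      exact hne (congrArg y (Fin.ext hc))
    have heq : (φ ⟨j.1 + 1, h⟩).1 = (φ j).1 + 1 := by omega
    have hb : (φ j).1 + 1 < m := heq ▸ (φ ⟨j.1 + 1, h⟩).2
    refine ⟨hb, ?_⟩
    have h3 : (⟨(φ j).1 + 1, hb⟩ : Fin m) = φ ⟨j.1 + 1, h⟩ :=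
      Fin.ext (show (φ j).1 + 1 = (φ ⟨j.1 + 1, h⟩).1 from heq.symm)
    rw [h3]
    exact hne
  · intro j hj j' hj' hfeq
    simp only [Finset.mem_coe, Finset.mem_filter, Finset.mem_univ, true_and] at hj hj'
    rcases Nat.lt_or_ge j.1 j'.1 with hlt | hge
    · exfalso
      obtain ⟨h, hxne⟩ := hj
      have hj1 := hjump j h
      have hne' : (φ j).1 ≠ (φ ⟨j.1 + 1, h⟩).1 := fun hc => hxne (congrArg y (Fin.ext hc))
      have hj2 := hmono j ⟨j.1 + 1, h⟩ (Nat.le_succ _)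
      have h4 := hmono ⟨j.1 + 1, h⟩ j' (show j.1 + 1 ≤ j'.1 by omega)
      exact absurd (congrArg Fin.val hfeq) (by omega)
    · rcases Nat.lt_or_ge j'.1 j.1 with hlt' | hge'
      · exfalso
        obtain ⟨h, hxne⟩ := hj'
        have hj1 := hjump j' h
        have hne' : (φ j').1 ≠ (φ ⟨j'.1 + 1, h⟩).1 := fun hc => hxne (congrArg y (Fin.ext hc))
        have hj2 := hmono j' ⟨j'.1 + 1, h⟩ (Nat.le_succ _)
        have h4 := hmono ⟨j'.1 + 1, h⟩ j (show j'.1 + 1 ≤ j.1 by omega)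
        exact absurd (congrArg Fin.val hfeq) (by omega)
      · exact Fin.ext (by omega)


def Efull (A : Type) (m : ℕ) : Set (Fin m → A) :=
  {x | ∃ i : ℕ, ∃ h : i + 1 < m, x ⟨i, by omega⟩ = x ⟨i + 1, h⟩}

lemma sw_add_two_le {m : ℕ} (y : Fin m → A) (hy : y ∈ Efull A m) : sw y + 2 ≤ m := by
  obtain ⟨i, h, heq⟩ := hy
  have hm2 : 2 ≤ m := by omega
  set G : Finset (Fin m) := Finset.univ.filter (fun j : Fin m => j.1 + 1 < m) with hG
  have hFG : Finset.univ.filter (fun j : Fin m => sswitch y j) ⊂ G := by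
    rw [Finset.ssubset_iff_of_subset]
    · refine ⟨⟨i, by omega⟩, ?_, ?_⟩
      · simp only [hG, Finset.mem_filter, Finset.mem_univ, true_and]
        exact h
      · simp only [Finset.mem_filter, Finset.mem_univ, true_and]
        rintro ⟨h', hne⟩
        exact hne (by convert heq using 2)
    · intro j hj
      simp only [Finset.mem_filter, Finset.mem_univ, true_and] at hj
      simp only [hG, Finset.mem_filter, Finset.mem_univ, true_and]
      obtain ⟨h', _⟩ := hj
      exact h' 
  have hGcard : G.card ≤ m - 1 := by
    have := Finset.card_le_card_of_injOn
      (f := fun j : Fin m => (⟨min j.1 (m - 2), by omega⟩ : Fin (m - 1)))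
      (s := G) (t := Finset.univ) (fun a _ => Finset.mem_univ _) ?_
    · simpa using this
    · intro j hj j' hj' hfe
      simp only [hG, Finset.mem_coe, Finset.mem_filter, Finset.mem_univ, true_and] at hj hj'
      have := congrArg Fin.val hfe
      simp only at this
      apply Fin.ext
      omega
  have := Finset.card_lt_card hFG
  unfold sw
  omega

lemma blow {n : ℕ} [Nonempty A] (x : Fin n → A) :
    ∃ (φ : Fin n → Fin (sw x + 1)) (z : Fin (sw x + 1) → A),
      (∀ j j' : Fin n, j.1 ≤ j'.1 → (φ j).1 ≤ (φ j').1) ∧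
      (∀ j : Fin n, ∀ h : j.1 + 1 < n, (φ ⟨j.1 + 1, h⟩).1 ≤ (φ j).1 + 1) ∧
      x = fun t => z (φ t) := by
  refine ⟨fun j => ⟨swp x j, Nat.lt_succ_of_le (swp_le_sw x j)⟩,
    fun mv => if h : ∃ i : Fin n, swp x i = mv.1 then x h.choose else Classical.arbitrary A,
    ?_, ?_, ?_⟩
  · intro j j' h
    exact swp_mono x h
  · intro j h
    show swp x ⟨j.1 + 1, h⟩ ≤ swp x j + 1
    rw [swp_adj x j h]
    split <;> omega
  · funext t
    have hex : ∃ i : Fin n, swp x i = swp x t := ⟨t, rfl⟩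
    show x t = if h : ∃ i : Fin n, swp x i = swp x t then x h.choose else Classical.arbitrary A
    rw [dif_pos hex]
    have hspec : swp x hex.choose = swp x t := hex.choose_spec
    rcases Nat.le_total hex.choose.1 t.1 with hle | hle
    · exact (swp_const x (t.1 - hex.choose.1) hex.choose t (by omega) hspec).symm
    · exact swp_const x (hex.choose.1 - t.1) t hex.choose (by omega) hspec.symm


/-! ### The polynomial-size generating family -/

noncomputable def Xfin (A : Type) [Fintype A] (M n : ℕ) : Finset (Fin n → A) :=
  ((Finset.univ : Finset ((Fin M → A) × (Fin n → Fin M))).filter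
    (fun p => Monotone p.2)).image (fun p => p.1 ∘ p.2)

lemma card_val_lt {n : ℕ} (c : ℕ) :
    (Finset.univ.filter (fun j : Fin n => j.1 < c)).card ≤ c := by
  have := Finset.card_le_card_of_injOn (f := fun j : Fin n => j.1)
    (s := Finset.univ.filter (fun j : Fin n => j.1 < c)) (t := Finset.range c)
    (by intro j hj
        simp only [Finset.mem_coe, Finset.mem_filter] at hj
        simp only [Finset.mem_coe, Finset.mem_range]
        exact hj.2)
    (fun a _ b _ h => Fin.ext h)
  simpa using this

lemma ls {n M : ℕ} {φ : Fin n → Fin M} (hm : Monotone φ) (i : Fin n) (mv : Fin M) :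
    i.1 < (Finset.univ.filter (fun i' => φ i' ≤ mv)).card ↔ φ i ≤ mv := by
  constructor
  · intro h
    by_contra hn
    have hsub : (Finset.univ.filter (fun i' => φ i' ≤ mv)) ⊆
        (Finset.univ.filter (fun j : Fin n => j.1 < i.1)) := by
      intro j hj
      simp only [Finset.mem_filter, Finset.mem_univ, true_and] at *
      by_contra hc
      have : i ≤ j := by
        rw [Fin.le_def]; omega
      exact hn (le_trans (hm this) hj)
    have := le_trans (Finset.card_le_card hsub) (card_val_lt i.1)
    omega
  · intro h
    have hn0 : 0 < n := i.pos
    have := Finset.card_le_card_of_injOn (f := fun v : ℕ => (⟨min v i.1, by omega⟩ : Fin n))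
      (s := Finset.range (i.1 + 1)) (t := Finset.univ.filter (fun i' => φ i' ≤ mv))
      (by intro v hv
          simp only [Finset.mem_coe, Finset.mem_range] at hv
          simp only [Finset.mem_coe, Finset.mem_filter, Finset.mem_univ, true_and]
          refine le_trans (hm ?_) h
          show min v i.1 ≤ i.1
          omega)
      (by intro a ha b hb hab
          simp only [Finset.mem_coe, Finset.mem_range] at ha hb
          have := congrArg Fin.val hab
          simp only at this
          omega)
    simp only [Finset.card_range] at this
    omega

lemma card_Xfin_le (A : Type) [Fintype A] (M n : ℕ) :
    (Xfin A M n).card ≤ Fintype.card A ^ M * (n + 1) ^ M := by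
  refine le_trans Finset.card_image_le ?_
  have := Finset.card_le_card_of_injOn
    (f := fun p : (Fin M → A) × (Fin n → Fin M) =>
      ((p.1, fun mv : Fin M =>
        (⟨(Finset.univ.filter (fun i' => p.2 i' ≤ mv)).card,
          by exact Nat.lt_succ_of_le (le_trans (Finset.card_filter_le _ _) (by simp))⟩
            : Fin (n + 1)))
        : (Fin M → A) × (Fin M → Fin (n + 1))))
    (s := (Finset.univ : Finset ((Fin M → A) × (Fin n → Fin M))).filter (fun p => Monotone p.2))
    (t := Finset.univ)
    (fun a _ => Finset.mem_univ _)
    (by intro p hp q hq hpq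
        simp only [Finset.mem_coe, Finset.mem_filter] at hp hq
        simp only at hpq
        rw [Prod.mk.injEq] at hpq
        obtain ⟨hp1, hp2⟩ := hpq
        refine Prod.ext hp1 ?_
        funext i
        have hcard : ∀ mv : Fin M,
            (Finset.univ.filter (fun i' => p.2 i' ≤ mv)).card =
            (Finset.univ.filter (fun i' => q.2 i' ≤ mv)).card := by
          intro mv
          have := congrFun hp2 mv
          exact congrArg Fin.val this
        apply le_antisymm
        · rw [← ls hp.2 i (q.2 i), hcard]
          rw [ls hq.2 i (q.2 i)]
        · rw [← ls hq.2 i (p.2 i), ← hcard]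
          rw [ls hp.2 i (p.2 i)])
  refine le_trans this ?_
  rw [Finset.card_univ, Fintype.card_prod, Fintype.card_fun, Fintype.card_fun]
  simp [mul_comm]

lemma mem_Xfin_of_low {A : Type} [Fintype A] [Nonempty A] {M n : ℕ} {x : Fin n → A}
    (hlow : sw x + 1 ≤ M) : x ∈ Xfin A M n := by
  obtain ⟨φ, z, hmono, hjump, hx⟩ := blow x
  unfold Xfin
  rw [Finset.mem_image]
  refine ⟨(fun mv : Fin M => z ⟨min mv.1 (sw x), by omega⟩,
           fun t => ⟨(φ t).1, by omega⟩), ?_, ?_⟩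
  · rw [Finset.mem_filter]
    refine ⟨Finset.mem_univ _, ?_⟩
    intro a b hab
    rw [Fin.le_def]
    exact hmono a b hab
  · funext t
    have hxt : x t = z (φ t) := congrFun hx t
    have hv : (φ t).1 < sw x + 1 := (φ t).2
    show z ⟨min (φ t).1 (sw x), by omega⟩ = x t
    rw [hxt]
    congr 1
    apply Fin.ext
    show min (φ t).1 (sw x) = (φ t).1
    omega

lemma swgen {A : Type} [Fintype A] [Nonempty A] {𝔸 : MyAlgebra A} (hid : 𝔸.Idempotent)
    {M : ℕ} (hM : 1 ≤ M)
    (hfull : ∀ m, M ≤ m → 𝔸.gen (Efull A m) = Set.univ) :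
    ∀ K : ℕ, ∀ n : ℕ, ∀ x : Fin n → A, sw x ≤ K → x ∈ 𝔸.gen ↑(Xfin A M n) := by
  intro K
  induction K with
  | zero =>
    intro n x hx
    exact subset_gen (mem_Xfin_of_low (by omega))
  | succ K ih =>
    intro n x hx
    by_cases hle : sw x ≤ K
    · exact ih n x hle
    · by_cases hlow : sw x + 1 ≤ M
      · exact subset_gen (mem_Xfin_of_low hlow)
      · obtain ⟨φ, z, hmono, hjump, hxeq⟩ := blow x
        have hz : z ∈ 𝔸.gen (Efull A (sw x + 1)) :=
          (Set.eq_univ_iff_forall.mp (hfull (sw x + 1) (by omega))) z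
        have hxg : x = Glue (fun t => Sum.inl (φ t)) z := hxeq
        rw [hxg]
        refine glue_gen_le hid _ hz ?_
        intro y hy
        have h1 : Glue (fun t => Sum.inl (φ t)) y = fun t => y (φ t) := rfl
        rw [h1]
        have h2 : sw (fun t => y (φ t)) ≤ sw y := sw_comp φ hmono hjump y
        have h3 := sw_add_two_le y hy
        exact ih n _ (by omega)


/-! ### Consequences of EGP -/

lemma not_EGP_of_subsingleton {A : Type} [Fintype A] {𝔸 : MyAlgebra A}
    (hss : Subsingleton A) : ¬ 𝔸.EGP := by
  rintro ⟨b, C, hb, hC, hle⟩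
  have key : ∀ n : ℕ, C * b ^ n ≤ 1 := by
    intro n
    have hgen : 𝔸.gen ((Finset.univ : Finset (Fin n → A)) : Set (Fin n → A)) = Set.univ := by
      apply Set.eq_univ_of_univ_subset
      intro x _
      exact subset_gen (by simp)
    have := hle n Finset.univ hgen
    have hcard : (Finset.univ : Finset (Fin n → A)).card ≤ 1 := by
      rw [Finset.card_univ]
      exact Fintype.card_le_one_iff_subsingleton.mpr (by
        haveI := hss; infer_instance)
    calc C * b ^ n ≤ ((Finset.univ : Finset (Fin n → A)).card : ℝ) := this
      _ ≤ 1 := by exact_mod_cast hcard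
  obtain ⟨n, hn⟩ := exists_nat_gt ((1 / C) / (b - 1))
  have hb1 : (0:ℝ) < b - 1 := by linarith
  have hbern : 1 + (n:ℝ) * (b - 1) ≤ b ^ n := by
    have := one_add_mul_le_pow (a := b - 1) (by linarith) n
    simpa only [add_sub_cancel] using this
  have h1 : (1 / C) < (n:ℝ) * (b - 1) := by
    rw [div_lt_iff₀ hb1] at hn
    linarith
  have := key n
  have h2 : C * (1 + (n:ℝ) * (b - 1)) ≤ C * b ^ n :=
    mul_le_mul_of_nonneg_left hbern (le_of_lt hC)
  have h3 : 1 < C * (1 + (n:ℝ) * (b - 1)) := by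
    rw [div_lt_iff₀ hC] at h1
    nlinarith
  linarith

lemma nontrivial_of_EGP {A : Type} [Fintype A] {𝔸 : MyAlgebra A} (hEGP : 𝔸.EGP) :
    ∃ a b : A, a ≠ b := by
  by_contra h
  push_neg at h
  exact not_EGP_of_subsingleton ⟨fun a b => h a b⟩ hEGP

lemma arity_pos {A : Type} {𝔸 : MyAlgebra A} (hid : 𝔸.Idempotent)
    (hnt : ∃ a b : A, a ≠ b) (i : 𝔸.ι) : 0 < 𝔸.arity i := by
  obtain ⟨a, b, hab⟩ := hnt
  rcases Nat.eq_zero_or_pos (𝔸.arity i) with h0 | h0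
  · exfalso
    have heq : (fun _ : Fin (𝔸.arity i) => a) = (fun _ => b) := by
      funext j
      have := j.2
      omega
    exact hab (calc a = 𝔸.op i (fun _ => a) := (hid i a).symm
      _ = 𝔸.op i (fun _ => b) := by rw [heq]
      _ = b := hid i b)
  · exact h0

open Filter in
lemma exists_nonfull {A : Type} [Fintype A] [Nonempty A] {𝔸 : MyAlgebra A}
    (hid : 𝔸.Idempotent) (hEGP : 𝔸.EGP) (M : ℕ) :
    ∃ m : ℕ, M ≤ m ∧ 𝔸.gen (Efull A m) ≠ Set.univ := by
  by_contra hcon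
  push_neg at hcon
  have hfull : ∀ m, M + 1 ≤ m → 𝔸.gen (Efull A m) = Set.univ := by
    intro m hm
    exact hcon m (by omega)
  set M' := M + 1 with hM'
  have hgen : ∀ n : ℕ, 𝔸.gen ((Xfin A M' n : Finset (Fin n → A)) : Set (Fin n → A)) = Set.univ := by
    intro n
    apply Set.eq_univ_of_univ_subset
    intro x _
    exact swgen hid (by omega) hfull (sw x) n x le_rfl
  obtain ⟨b, C, hb, hC, hle⟩ := hEGP
  have key : ∀ n : ℕ, C * b ^ n ≤ ((Fintype.card A) ^ M' * (n + 1) ^ M' : ℝ) := by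
    intro n
    refine le_trans (hle n _ (hgen n)) ?_
    have := card_Xfin_le A M' n
    calc ((Xfin A M' n).card : ℝ)
        ≤ ((Fintype.card A ^ M' * (n + 1) ^ M' : ℕ) : ℝ) := by exact_mod_cast this
      _ = (Fintype.card A) ^ M' * (n + 1) ^ M' := by push_cast; ring
  set D : ℝ := (Fintype.card A : ℝ) ^ M' * 2 ^ M' with hD
  have hD0 : 0 < D + 1 := by
    have : (0:ℝ) ≤ D := by positivity
    linarith
  have hlit := isLittleO_pow_const_const_pow_of_one_lt (R := ℝ) M' hb
  have hc : (0:ℝ) < C / (2 * (D + 1)) := by positivity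
  have hev := hlit.def hc
  obtain ⟨n, hn1, hn2⟩ := ((eventually_ge_atTop 1).and hev).exists
  have hbn : (0:ℝ) < b ^ n := pow_pos (by linarith) n
  have hnorm : ((n:ℝ)) ^ M' ≤ C / (2 * (D + 1)) * b ^ n := by
    have := hn2
    rw [Real.norm_eq_abs, Real.norm_eq_abs, abs_of_nonneg (by positivity),
      abs_of_nonneg (le_of_lt hbn)] at this
    exact this
  have hstep : ((n:ℝ) + 1) ^ M' ≤ 2 ^ M' * (n:ℝ) ^ M' := by
    rw [← mul_pow]
    apply pow_le_pow_left₀ (by positivity)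
    have : (n : ℝ) ≥ 1 := by exact_mod_cast hn1
    linarith
  have hchain : C * b ^ n ≤ D * ((n:ℝ)) ^ M' := by
    refine le_trans (key n) ?_
    calc ((Fintype.card A : ℝ)) ^ M' * ((n:ℝ) + 1) ^ M'
        ≤ (Fintype.card A : ℝ) ^ M' * (2 ^ M' * (n:ℝ) ^ M') := by
          apply mul_le_mul_of_nonneg_left hstep (by positivity)
      _ = D * (n:ℝ) ^ M' := by rw [hD]; ring
  have hfin : C * b ^ n ≤ D * (C / (2 * (D + 1)) * b ^ n) := by
    refine le_trans hchain ?_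
    apply mul_le_mul_of_nonneg_left hnorm (by positivity)
  have : D * (C / (2 * (D + 1)) * b ^ n) < C * b ^ n := by
    have hDlt : D * (C / (2 * (D + 1))) < C := by
      rw [mul_div_assoc']
      rw [div_lt_iff₀ (by linarith)]
      nlinarith [hC]
    calc D * (C / (2 * (D + 1)) * b ^ n) = (D * (C / (2 * (D + 1)))) * b ^ n := by ring
      _ < C * b ^ n := by exact mul_lt_mul_of_pos_right hDlt hbn
  linarith


/-! ### Existence of a free pair -/

lemma allp_up {A : Type} {𝔸 : MyAlgebra A} (hid : 𝔸.Idempotent) {p : A × A} {k k' : ℕ}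
    (hkk' : k ≤ k') (h : ptup p k ∈ Om 𝔸 k) : ptup p k' ∈ Om 𝔸 k' := by
  obtain ⟨v', hv', hpr⟩ := pad hid hkk' p h
  have : v' = ptup p k' := by
    apply eq_ptup
    intro i
    rw [hpr i]
    split
    · exact pr_ptup _
    · rfl
  rw [← this]
  exact hv'

lemma restrict_not_Om {A : Type} [Fintype A] {𝔸 : MyAlgebra A} (hid : 𝔸.Idempotent)
    {m : ℕ} {c : Fin m → A} (hc : c ∉ 𝔸.gen (Efull A m)) {k : ℕ} (hkm : 2 * k ≤ m) :
    (fun t : Fin (2 * k) => c ⟨t.1, by omega⟩) ∉ Om 𝔸 k := by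
  set c' : Fin (2 * k) → A := fun t => c ⟨t.1, by omega⟩ with hc'
  set e₁ : Fin m → (Fin (2 * k) ⊕ A) := fun t =>
    if h : t.1 < 2 * k then Sum.inl ⟨t.1, h⟩ else Sum.inr (c t) with he₁
  have hglue : Glue e₁ c' = c := by
    funext t
    unfold Glue
    by_cases h : t.1 < 2 * k
    · simp only [he₁, dif_pos h]
      show c _ = c t
      congr 1
    · simp only [he₁, dif_neg h]
      rfl
  intro hmem
  apply hc
  rw [← hglue]
  have hτ : Om 𝔸 k ⊆ {y : Fin (2 * k) → A | Glue e₁ y ∈ 𝔸.gen (Efull A m)} := by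
    apply gen_le
    · intro y hy
      rw [mem_Drel_iff] at hy
      obtain ⟨i, hi⟩ := hy
      simp only [Set.mem_setOf_eq]
      apply subset_gen
      refine ⟨2 * i.1, by omega, ?_⟩
      unfold Glue
      have h1 : 2 * i.1 < 2 * k := by omega
      have h2 : 2 * i.1 + 1 < 2 * k := by omega
      simp only [he₁, dif_pos h1, dif_pos h2]
      exact hi
    · exact closed_glue_pre hid e₁ closed_gen
  exact hτ hmem

def pIdx {k : ℕ} (t : Fin (2 * k)) : Fin k := ⟨t.1 / 2, by omega⟩

lemma pIdx_plo {k : ℕ} (i : Fin k) : pIdx (plo i) = i := by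
  apply Fin.ext
  show (2 * i.1) / 2 = i.1
  omega

lemma pIdx_phi {k : ℕ} (i : Fin k) : pIdx (phi i) = i := by
  apply Fin.ext
  show (2 * i.1 + 1) / 2 = i.1
  omega

lemma plo_mod {k : ℕ} (i : Fin k) : (plo i).1 % 2 = 0 := by
  show (2 * i.1) % 2 = 0; omega

lemma phi_mod {k : ℕ} (i : Fin k) : (phi i).1 % 2 = 1 := by
  show (2 * i.1 + 1) % 2 = 1; omega

lemma exists_free_pair {A : Type} [Fintype A] [Nonempty A] {𝔸 : MyAlgebra A}
    (hid : 𝔸.Idempotent) (hEGP : 𝔸.EGP) : ∃ p : A × A, IsFree 𝔸 {p} := by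
  by_contra hcon
  push_neg at hcon
  have hch : ∀ p : A × A, ∃ kp : ℕ, ptup p kp ∈ Om 𝔸 kp := by
    intro p
    obtain ⟨k, x, hall, hmem⟩ := not_isFree_iff.mp (hcon p)
    exact ⟨k, (eq_ptup (fun i => hall i)) ▸ hmem⟩
  set kf : A × A → ℕ := fun p => (hch p).choose with hkf
  set K : ℕ := (Finset.univ : Finset (A × A)).sup kf with hK
  have hallK : ∀ p : A × A, ptup p K ∈ Om 𝔸 K := by
    intro p
    exact allp_up hid (Finset.le_sup (Finset.mem_univ p)) (hch p).choose_spec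
  obtain ⟨m, hmge, hmne⟩ := exists_nonfull hid hEGP (2 * ((K + 1) * Fintype.card (A × A)))
  obtain ⟨c, hc⟩ : ∃ c : Fin m → A, c ∉ 𝔸.gen (Efull A m) := by
    by_contra hcc
    push_neg at hcc
    exact hmne (Set.eq_univ_of_univ_subset (fun x _ => hcc x))
  set k : ℕ := m / 2 with hk
  have hkm : 2 * k ≤ m := by omega
  have hkge : (K + 1) * Fintype.card (A × A) ≤ k := by omega
  set c' : Fin (2 * k) → A := fun t => c ⟨t.1, by omega⟩ with hc'
  have hc'n : c' ∉ Om 𝔸 k := restrict_not_Om hid hc hkm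
  -- pigeonhole
  have hcard : Fintype.card (A × A) * K < Fintype.card (Fin k) := by
    rw [Fintype.card_fin]
    have h1 : 1 ≤ Fintype.card (A × A) := Fintype.card_pos
    nlinarith
  obtain ⟨p, hp⟩ := Fintype.exists_lt_card_fiber_of_mul_lt_card (fun i : Fin k => pr c' i) hcard
  set F : Finset (Fin k) := Finset.univ.filter (fun i => pr c' i = p) with hF
  set cnt : ℕ := F.card with hcnt
  have hcntK : K < cnt := hp
  set g := F.orderIsoOfFin rfl with hg
  set sel : Fin k → Option (Fin cnt) := fun j =>
    if h : j ∈ F then some (g.symm ⟨j, h⟩) else none with hsel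
  set e₂ : Fin (2 * k) → (Fin (2 * cnt) ⊕ A) := fun t =>
    (sel (pIdx t)).elim (Sum.inr (c' t))
      (fun u => Sum.inl ⟨2 * u.1 + t.1 % 2, by have := u.2; omega⟩) with he₂
  have hsel_mem : ∀ i : Fin cnt, sel (g i).1 = some i := by
    intro i
    have hm : ((g i).1 : Fin k) ∈ F := (g i).2
    simp only [hsel, dif_pos hm]
    congr 1
    have : (⟨(g i).1, hm⟩ : {x // x ∈ F}) = g i := Subtype.ext rfl
    rw [this]
    exact g.symm_apply_apply i
  have he2a : ∀ (t : Fin (2 * k)) (i : Fin cnt), pIdx t = (g i).1 →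
      e₂ t = Sum.inl ⟨2 * i.1 + t.1 % 2, by have := i.2; omega⟩ := by
    intro t i ht
    simp only [he₂, ht, hsel_mem i]
    rfl
  have he2b : ∀ t : Fin (2 * k), pIdx t ∉ F → e₂ t = Sum.inr (c' t) := by
    intro t ht
    simp only [he₂, hsel, dif_neg ht]
    rfl
  have hτ : Om 𝔸 cnt ⊆ {y : Fin (2 * cnt) → A | Glue e₂ y ∈ Om 𝔸 k} := by
    apply gen_le
    · intro y hy
      rw [mem_Drel_iff] at hy
      obtain ⟨i, hi⟩ := hy
      simp only [Set.mem_setOf_eq]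
      apply drel_subset_Om
      rw [mem_Drel_iff]
      refine ⟨(g i).1, ?_⟩
      have h0 : Glue e₂ y (plo (g i).1) = y (plo i) := by
        unfold Glue
        rw [he2a (plo (g i).1) i (pIdx_plo _)]
        show y _ = y (plo i)
        congr 1
        apply Fin.ext
        show 2 * i.1 + (plo ((g i).1 : Fin k)).1 % 2 = 2 * i.1
        rw [plo_mod]
        omega
      have h1 : Glue e₂ y (phi (g i).1) = y (phi i) := by
        unfold Glue
        rw [he2a (phi (g i).1) i (pIdx_phi _)]
        show y _ = y (phi i)
        congr 1
        apply Fin.ext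
        show 2 * i.1 + (phi ((g i).1 : Fin k)).1 % 2 = 2 * i.1 + 1
        rw [phi_mod]
      show (Glue e₂ y) (plo (g i).1) = (Glue e₂ y) (phi (g i).1)
      rw [h0, h1]
      exact hi
    · exact closed_glue_pre hid e₂ closed_Om
  have hgl : Glue e₂ (ptup p cnt) = c' := by
    funext t
    by_cases hmem : pIdx t ∈ F
    · set i := g.symm ⟨pIdx t, hmem⟩ with hi
      have hgi : (g i).1 = pIdx t := by
        rw [hi, g.apply_symm_apply]
      unfold Glue
      rw [he2a t i hgi.symm]
      show ptup p cnt _ = c' t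
      have hpc : pr c' (pIdx t) = p := by
        have := hmem
        rw [hF, Finset.mem_filter] at this
        exact this.2
      unfold ptup
      by_cases hpar : t.1 % 2 = 0
      · have : (2 * i.1 + t.1 % 2) % 2 = 0 := by omega
        rw [if_pos this]
        have ht : t = plo (pIdx t) := by
          apply Fin.ext
          show t.1 = 2 * (t.1 / 2)
          omega
        conv_rhs => rw [ht]
        exact (congrArg Prod.fst hpc).symm
      · have : ¬ ((2 * i.1 + t.1 % 2) % 2 = 0) := by omega
        rw [if_neg this]
        have ht : t = phi (pIdx t) := by
          apply Fin.ext
          show t.1 = 2 * (t.1 / 2) + 1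
          omega
        conv_rhs => rw [ht]
        exact (congrArg Prod.snd hpc).symm
    · unfold Glue
      rw [he2b t hmem]
      rfl
  have hpt : ptup p cnt ∈ Om 𝔸 cnt := allp_up hid (by omega) (hallK p)
  have := hτ hpt
  rw [Set.mem_setOf_eq, hgl] at this
  exact hc'n this


/-! ### Maximal free sets -/

noncomputable def eflip (A : Type) {k : ℕ} (S : Set (Fin k)) :
    Fin (2 * k) → (Fin (2 * k) ⊕ A) :=
  fun t => Sum.inl (if pIdx t ∈ S then
    (⟨2 * (t.1 / 2) + (1 - t.1 % 2), by have := t.2; omega⟩ : Fin (2 * k)) else t)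

lemma eflip_lo {k : ℕ} (S : Set (Fin k)) (i : Fin k) :
    eflip A S (plo i) = Sum.inl (if i ∈ S then phi i else plo i) := by
  unfold eflip
  rw [pIdx_plo]
  congr 1
  by_cases h : i ∈ S
  · rw [if_pos h, if_pos h]
    apply Fin.ext
    show 2 * ((plo i).1 / 2) + (1 - (plo i).1 % 2) = (phi i).1
    have h1 : (plo i).1 = 2 * i.1 := rfl
    have h2 : (phi i).1 = 2 * i.1 + 1 := rfl
    rw [h1, h2]
    omega
  · rw [if_neg h, if_neg h]

lemma eflip_hi {k : ℕ} (S : Set (Fin k)) (i : Fin k) :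
    eflip A S (phi i) = Sum.inl (if i ∈ S then plo i else phi i) := by
  unfold eflip
  rw [pIdx_phi]
  congr 1
  by_cases h : i ∈ S
  · rw [if_pos h, if_pos h]
    apply Fin.ext
    show 2 * ((phi i).1 / 2) + (1 - (phi i).1 % 2) = (plo i).1
    have h1 : (phi i).1 = 2 * i.1 + 1 := rfl
    have h2 : (plo i).1 = 2 * i.1 := rfl
    rw [h1, h2]
    omega
  · rw [if_neg h, if_neg h]

lemma flip_pairs {k : ℕ} (S : Set (Fin k)) (y : Fin (2 * k) → A) (i : Fin k) :
    pr (Glue (eflip A S) y) i =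
      if i ∈ S then ((pr y i).2, (pr y i).1) else pr y i := by
  show (Glue (eflip A S) y (plo i), Glue (eflip A S) y (phi i)) = _
  unfold Glue
  rw [eflip_lo, eflip_hi]
  by_cases h : i ∈ S
  · rw [if_pos h, if_pos h, if_pos h]
    rfl
  · rw [if_neg h, if_neg h, if_neg h]
    rfl

lemma flip_Om {A : Type} {𝔸 : MyAlgebra A} (hid : 𝔸.Idempotent) {k : ℕ}
    (S : Set (Fin k)) {x : Fin (2 * k) → A} (hx : x ∈ Om 𝔸 k) :
    Glue (eflip A S) x ∈ Om 𝔸 k := by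
  refine glue_gen_le hid _ hx ?_
  intro y hy
  apply drel_subset_Om
  rw [mem_Drel_iff] at hy ⊢
  obtain ⟨i, hi⟩ := hy
  refine ⟨i, ?_⟩
  have := flip_pairs S y i
  by_cases h : i ∈ S
  · rw [if_pos h] at this
    rw [this]
    exact hi.symm
  · rw [if_neg h] at this
    rw [this]
    exact hi

/-- Existence of a maximal free finite set of pairs, with its key properties. -/
lemma exists_max_free {A : Type} [Fintype A] [Nonempty A] {𝔸 : MyAlgebra A}
    (hid : 𝔸.Idempotent) (hEGP : 𝔸.EGP) :
    ∃ P : Finset (A × A), IsFree 𝔸 ↑P ∧ P.Nonempty ∧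
      (∀ q ∉ P, ¬ IsFree 𝔸 ↑(insert q P)) ∧
      (∀ d : A, (d, d) ∉ P) ∧
      (∀ u v : A, (u, v) ∈ P → (v, u) ∈ P) := by
  obtain ⟨p0, hp0⟩ := exists_free_pair hid hEGP
  set 𝒞 : Finset (Finset (A × A)) := Finset.univ.filter (fun Q => IsFree 𝔸 ↑Q) with h𝒞
  have h1 : {p0} ∈ 𝒞 := by
    rw [h𝒞, Finset.mem_filter]
    refine ⟨Finset.mem_univ _, ?_⟩
    rw [Finset.coe_singleton]
    exact hp0
  obtain ⟨P, hPmem, hPmax⟩ := Finset.exists_max_image 𝒞 Finset.card ⟨_, h1⟩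
  have hPfree : IsFree 𝔸 ↑P := by
    rw [h𝒞, Finset.mem_filter] at hPmem
    exact hPmem.2
  have hirr : ∀ d : A, (d, d) ∉ P := by
    intro d hd
    refine hPfree 1 (fun _ => d) (fun i => ?_) (drel_subset_Om ?_)
    · show ((d : A), d) ∈ (↑P : Set (A × A))
      exact hd
    · rw [mem_Drel_iff]
      exact ⟨⟨0, by omega⟩, rfl⟩
  have hmax1 : ∀ q ∉ P, ¬ IsFree 𝔸 ↑(insert q P) := by
    intro q hq hfree
    have hmem : insert q P ∈ 𝒞 := by
      rw [h𝒞, Finset.mem_filter]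
      exact ⟨Finset.mem_univ _, hfree⟩
    have := hPmax _ hmem
    rw [Finset.card_insert_of_notMem hq] at this
    omega
  refine ⟨P, hPfree, ?_, hmax1, hirr, ?_⟩
  · -- nonempty
    rcases Finset.eq_empty_or_nonempty P with h | h
    · exfalso
      have := hPmax _ h1
      rw [h] at this
      simp at this
    · exact h
  · -- symmetry
    intro u v huv
    by_contra hvu
    obtain ⟨kk, x, hall, hx⟩ := not_isFree_iff.mp (hmax1 (v, u) hvu)
    set S : Set (Fin kk) := {i | pr x i = (v, u)} with hS
    have hx' : Glue (eflip A S) x ∈ Om 𝔸 kk := flip_Om hid S hx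
    refine hPfree kk (Glue (eflip A S) x) ?_ hx'
    intro i
    have hfp := flip_pairs S x i
    by_cases h : i ∈ S
    · rw [if_pos h] at hfp
      rw [hfp]
      have : pr x i = (v, u) := h
      rw [this]
      exact huv
    · rw [if_neg h] at hfp
      rw [hfp]
      have h2 := hall i
      rw [Finset.coe_insert, Set.mem_insert_iff] at h2
      rcases h2 with h2 | h2
      · exact absurd h2 h
      · exact h2


/-! ### Every operation has a good coordinate -/

lemma good {A : Type} [Fintype A] [Nonempty A] {𝔸 : MyAlgebra A} (hid : 𝔸.Idempotent)
    {P : Finset (A × A)} (hPfree : IsFree 𝔸 ↑P) (hPne : P.Nonempty)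
    (hmax1 : ∀ q ∉ P, ¬ IsFree 𝔸 ↑(insert q P))
    (harity : ∀ i : 𝔸.ι, 0 < 𝔸.arity i) (i0 : 𝔸.ι) :
    ∃ j : Fin (𝔸.arity i0), ∀ u w : Fin (𝔸.arity i0) → A,
      (u j, w j) ∉ P → (𝔸.op i0 u, 𝔸.op i0 w) ∉ P := by
  set s := 𝔸.arity i0 with hsdef
  by_contra hcon
  push_neg at hcon
  choose U W hUW hOP using hcon
  have hspos : 0 < s := harity i0
  set r : Fin s → A × A := fun j => (U j j, W j j) with hrdef
  have hwit : ∀ j : Fin s, ∃ kk : ℕ, ∃ v : Fin (2 * kk) → A,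
      (∀ ii, pr v ii ∈ (insert (r j) ↑P : Set (A × A))) ∧ v ∈ Om 𝔸 kk := by
    intro j
    obtain ⟨kk, v, h1, h2⟩ := not_isFree_iff.mp (hmax1 (r j) (hUW j))
    refine ⟨kk, v, fun ii => ?_, h2⟩
    have := h1 ii
    rwa [Finset.coe_insert] at this
  choose kk v hvpr hvom using hwit
  obtain ⟨p₀, hp₀⟩ := hPne
  set ks : ℕ := Finset.univ.sup kk with hks
  have hpad : ∀ j : Fin s, ∃ v' : Fin (2 * ks) → A, v' ∈ Om 𝔸 ks ∧
      ∀ ii : Fin ks, pr v' ii ∈ (insert (r j) ↑P : Set (A × A)) := by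
    intro j
    obtain ⟨v', h1, h2⟩ := pad hid (Finset.le_sup (Finset.mem_univ j)) p₀ (hvom j)
    refine ⟨v', h1, fun ii => ?_⟩
    rw [h2 ii]
    by_cases h : ii.1 < kk j
    · rw [dif_pos h]; exact hvpr j _
    · rw [dif_neg h]; exact Set.mem_insert_iff.mpr (Or.inr hp₀)
  choose v' hv'om hv'pr using hpad
  have hks0 : 0 < ks := by
    rcases Nat.eq_zero_or_pos ks with h0 | h0
    · exact absurd (hv'om ⟨0, hspos⟩)
        (hPfree ks (v' ⟨0, hspos⟩) (fun ii => absurd ii.2 (by omega)))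
    · exact h0
  set N : ℕ := s * ks with hN
  have hlblk : ∀ ii : Fin N, ii.1 / ks < s := by
    intro ii
    have h2 := ii.2
    rw [Nat.div_lt_iff_lt_mul hks0]
    omega
  have hqblk : ∀ ii : Fin N, ii.1 % ks < ks := fun ii => Nat.mod_lt _ hks0
  set lblk : Fin N → Fin s := fun ii => ⟨ii.1 / ks, hlblk ii⟩ with hlb
  set qblk : Fin N → Fin ks := fun ii => ⟨ii.1 % ks, hqblk ii⟩ with hqb
  set Es : Fin s → Fin (2 * N) → (Fin (2 * ks) ⊕ A) := fun j t =>
    if lblk (pIdx t) = j then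
      Sum.inl ⟨2 * ((t.1 / 2) % ks) + t.1 % 2, by
        have h1 := Nat.mod_lt (t.1 / 2) hks0
        omega⟩
    else Sum.inr (if pr (v' (lblk (pIdx t))) (qblk (pIdx t)) ∈ P then
        (if t.1 % 2 = 0 then (pr (v' (lblk (pIdx t))) (qblk (pIdx t))).1
         else (pr (v' (lblk (pIdx t))) (qblk (pIdx t))).2)
      else (if t.1 % 2 = 0 then U (lblk (pIdx t)) j else W (lblk (pIdx t)) j)) with hEs
  have hEslo : ∀ (j : Fin s) (ii : Fin N), Es j (plo ii) =
      if lblk ii = j then Sum.inl (plo (qblk ii))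
      else Sum.inr (if pr (v' (lblk ii)) (qblk ii) ∈ P then (pr (v' (lblk ii)) (qblk ii)).1
        else U (lblk ii) j) := by
    intro j ii
    simp only [hEs, pIdx_plo]
    have hm : (plo ii).1 % 2 = 0 := plo_mod ii
    by_cases h : lblk ii = j
    · rw [if_pos h, if_pos h]
      congr 1
      apply Fin.ext
      show 2 * (((plo ii).1 / 2) % ks) + (plo ii).1 % 2 = (plo (qblk ii)).1
      have h1 : (plo ii).1 = 2 * ii.1 := rfl
      have h2 : (plo (qblk ii)).1 = 2 * (ii.1 % ks) := rfl
      rw [h1, h2]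
      have h3 : 2 * ii.1 / 2 = ii.1 := by omega
      rw [h3]
      omega
    · rw [if_neg h, if_neg h, if_pos hm, if_pos hm]
  have hEshi : ∀ (j : Fin s) (ii : Fin N), Es j (phi ii) =
      if lblk ii = j then Sum.inl (phi (qblk ii))
      else Sum.inr (if pr (v' (lblk ii)) (qblk ii) ∈ P then (pr (v' (lblk ii)) (qblk ii)).2
        else W (lblk ii) j) := by
    intro j ii
    simp only [hEs, pIdx_phi]
    have hm : (phi ii).1 % 2 = 1 := phi_mod ii
    by_cases h : lblk ii = j
    · rw [if_pos h, if_pos h]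
      congr 1
      apply Fin.ext
      show 2 * (((phi ii).1 / 2) % ks) + (phi ii).1 % 2 = (phi (qblk ii)).1
      have h1 : (phi ii).1 = 2 * ii.1 + 1 := rfl
      have h2 : (phi (qblk ii)).1 = 2 * (ii.1 % ks) + 1 := rfl
      rw [h1, h2]
      have h3 : (2 * ii.1 + 1) / 2 = ii.1 := by omega
      rw [h3]
      omega
    · rw [if_neg h, if_neg h]
      have hpar : ¬((phi ii).1 % 2 = 0) := by rw [hm]; exact one_ne_zero
      congr 1
      by_cases hmem : pr (v' (lblk ii)) (qblk ii) ∈ P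
      · rw [if_pos hmem, if_pos hmem, if_neg hpar]
      · rw [if_neg hmem, if_neg hmem, if_neg hpar]
  -- the block index
  have hgb : ∀ (j : Fin s) (q : Fin ks), j.1 * ks + q.1 < N := by
    intro j q
    have h1 : j.1 + 1 ≤ s := j.2
    have h2 := Nat.mul_le_mul_right ks h1
    have h3 : (j.1 + 1) * ks = j.1 * ks + ks := by ring
    have h4 := q.2
    omega
  set gidx : Fin s → Fin ks → Fin N := fun j q => ⟨j.1 * ks + q.1, hgb j q⟩ with hgi
  have hblkl : ∀ (j : Fin s) (q : Fin ks), lblk (gidx j q) = j := by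
    intro j q
    apply Fin.ext
    show (j.1 * ks + q.1) / ks = j.1
    have h1 : j.1 * ks + q.1 = ks * j.1 + q.1 := by ring
    rw [h1, Nat.mul_add_div hks0, Nat.div_eq_of_lt q.2]
    omega
  have hblkq : ∀ (j : Fin s) (q : Fin ks), qblk (gidx j q) = q := by
    intro j q
    apply Fin.ext
    show (j.1 * ks + q.1) % ks = q.1
    have h1 : j.1 * ks + q.1 = ks * j.1 + q.1 := by ring
    rw [h1, Nat.mul_add_mod, Nat.mod_eq_of_lt q.2]
  -- each W-tuple is in Ω_N
  have hWt : ∀ j : Fin s, Glue (Es j) (v' j) ∈ Om 𝔸 N := by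
    intro j
    refine glue_gen_le hid _ (hv'om j) ?_
    intro y hy
    apply drel_subset_Om
    rw [mem_Drel_iff] at hy ⊢
    obtain ⟨q, hq⟩ := hy
    refine ⟨gidx j q, ?_⟩
    show Glue (Es j) y (plo (gidx j q)) = Glue (Es j) y (phi (gidx j q))
    unfold Glue
    rw [hEslo j (gidx j q), hEshi j (gidx j q), hblkl j q, hblkq j q,
      if_pos rfl, if_pos rfl]
    exact hq
  -- the combined tuple
  have hOom : (fun t : Fin (2 * N) => 𝔸.op i0 (fun j => Glue (Es j) (v' j) t)) ∈ Om 𝔸 N :=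
    closed_Om i0 (fun j => Glue (Es j) (v' j)) hWt
  refine hPfree N _ ?_ hOom
  intro ii
  by_cases hP : pr (v' (lblk ii)) (qblk ii) ∈ P
  · have hlo : ∀ j, Glue (Es j) (v' j) (plo ii) = (pr (v' (lblk ii)) (qblk ii)).1 := by
      intro j
      unfold Glue
      rw [hEslo j ii]
      by_cases h : lblk ii = j
      · rw [if_pos h]
        show v' j (plo (qblk ii)) = _
        rw [← h]
        rfl
      · rw [if_neg h, if_pos hP]
        rfl
    have hhi : ∀ j, Glue (Es j) (v' j) (phi ii) = (pr (v' (lblk ii)) (qblk ii)).2 := by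
      intro j
      unfold Glue
      rw [hEshi j ii]
      by_cases h : lblk ii = j
      · rw [if_pos h]
        show v' j (phi (qblk ii)) = _
        rw [← h]
        rfl
      · rw [if_neg h, if_pos hP]
        rfl
    have hOlo : 𝔸.op i0 (fun j => Glue (Es j) (v' j) (plo ii)) =
        (pr (v' (lblk ii)) (qblk ii)).1 := by
      rw [funext hlo]
      exact hid i0 _
    have hOhi : 𝔸.op i0 (fun j => Glue (Es j) (v' j) (phi ii)) =
        (pr (v' (lblk ii)) (qblk ii)).2 := by
      rw [funext hhi]
      exact hid i0 _
    show (𝔸.op i0 (fun j => Glue (Es j) (v' j) (plo ii)),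
          𝔸.op i0 (fun j => Glue (Es j) (v' j) (phi ii))) ∈ (↑P : Set (A × A))
    rw [hOlo, hOhi]
    exact hP
  · have hrl : pr (v' (lblk ii)) (qblk ii) = r (lblk ii) := by
      have := hv'pr (lblk ii) (qblk ii)
      rw [Set.mem_insert_iff] at this
      rcases this with h | h
      · exact h
      · exact absurd h hP
    have hlo : ∀ j, Glue (Es j) (v' j) (plo ii) = U (lblk ii) j := by
      intro j
      unfold Glue
      rw [hEslo j ii]
      by_cases h : lblk ii = j
      · rw [if_pos h]
        show v' j (plo (qblk ii)) = _
        rw [← h]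
        exact congrArg Prod.fst hrl
      · rw [if_neg h, if_neg hP]
        rfl
    have hhi : ∀ j, Glue (Es j) (v' j) (phi ii) = W (lblk ii) j := by
      intro j
      unfold Glue
      rw [hEshi j ii]
      by_cases h : lblk ii = j
      · rw [if_pos h]
        show v' j (phi (qblk ii)) = _
        rw [← h]
        exact congrArg Prod.snd hrl
      · rw [if_neg h, if_neg hP]
        rfl
    have hOlo : 𝔸.op i0 (fun j => Glue (Es j) (v' j) (plo ii)) = 𝔸.op i0 (U (lblk ii)) := by
      rw [funext hlo]
    have hOhi : 𝔸.op i0 (fun j => Glue (Es j) (v' j) (phi ii)) = 𝔸.op i0 (W (lblk ii)) := by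
      rw [funext hhi]
    show (𝔸.op i0 (fun j => Glue (Es j) (v' j) (plo ii)),
          𝔸.op i0 (fun j => Glue (Es j) (v' j) (phi ii))) ∈ (↑P : Set (A × A))
    rw [hOlo, hOhi]
    exact hOP (lblk ii)

end Zhuk


/-- a finite idempotent algebra with EGP admits `α, β ⊊ A` with `α ∪ β = A`
such that for `ρ = (α × α) ∪ (β × β)` every `σ_n` is invariant. -/
theorem stmt_14 {A : Type} [Fintype A] (𝔸 : MyAlgebra A) (hid : 𝔸.Idempotent)
    (hEGP : 𝔸.EGP) :
    ∃ α β : Set A, α ≠ Set.univ ∧ β ≠ Set.univ ∧ α ∪ β = Set.univ ∧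
      ∀ n : ℕ, 𝔸.Closed (sigmaRel (α ×ˢ α ∪ β ×ˢ β) n) := by
  classical
  have hnt : ∃ a b : A, a ≠ b := Zhuk.nontrivial_of_EGP hEGP
  haveI : Nonempty A := ⟨hnt.choose⟩
  have harity : ∀ i : 𝔸.ι, 0 < 𝔸.arity i := Zhuk.arity_pos hid hnt
  obtain ⟨P, hPfree, hPne, hmax1, hirr, hsym⟩ := Zhuk.exists_max_free hid hEGP
  obtain ⟨⟨pa, pb⟩, hpab⟩ := hPne
  refine ⟨{z | (z, pb) ∉ P}, {z | ∃ c, (c, pb) ∈ P ∧ (z, c) ∉ P}, ?_, ?_, ?_, ?_⟩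
  · intro h
    have hmem : pa ∈ {z | (z, pb) ∉ P} := h ▸ Set.mem_univ pa
    exact hmem hpab
  · intro h
    have hmem : pb ∈ {z : A | ∃ c, (c, pb) ∈ P ∧ (z, c) ∉ P} := h ▸ Set.mem_univ pb
    obtain ⟨c, h1, h2⟩ := hmem
    exact h2 (hsym c pb h1)
  · apply Set.eq_univ_of_forall
    intro z
    by_cases h : (z, pb) ∈ P
    · exact Or.inr ⟨z, h, hirr z⟩
    · exact Or.inl h
  · intro n iop γ hγ
    obtain ⟨j, hj⟩ := Zhuk.good hid hPfree ⟨(pa, pb), hpab⟩ hmax1 harity iop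
    have hA : ∀ u : Fin (𝔸.arity iop) → A, u j ∈ {z | (z, pb) ∉ P} →
        𝔸.op iop u ∈ {z | (z, pb) ∉ P} := by
      intro u hu
      have := hj u (fun _ => pb) hu
      show (𝔸.op iop u, pb) ∉ P
      rwa [hid iop pb] at this
    have hB : ∀ u : Fin (𝔸.arity iop) → A, u j ∈ {z : A | ∃ c, (c, pb) ∈ P ∧ (z, c) ∉ P} →
        𝔸.op iop u ∈ {z : A | ∃ c, (c, pb) ∈ P ∧ (z, c) ∉ P} := by
      intro u hu
      obtain ⟨c, hc1, hc2⟩ := hu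
      refine ⟨c, hc1, ?_⟩
      have := hj u (fun _ => c) hc2
      show (𝔸.op iop u, c) ∉ P
      rwa [hid iop c] at this
    obtain ⟨i, h2i, hp⟩ := hγ j
    refine ⟨i, h2i, ?_⟩
    rcases hp with hp | hp
    · exact Or.inl (Set.mem_prod.mpr ⟨hA (fun j' => γ j' ⟨2 * i, by omega⟩) hp.1,
        hA (fun j' => γ j' ⟨2 * i + 1, h2i⟩) hp.2⟩)
    · exact Or.inr (Set.mem_prod.mpr ⟨hB (fun j' => γ j' ⟨2 * i, by omega⟩) hp.1,
        hB (fun j' => γ j' ⟨2 * i + 1, h2i⟩) hp.2⟩)
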